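/- If d > 2/3, then the quadratic λ² − 6λd + 4λ + 6 has a root with strictly positive real part, so the P1 DG semi-discrete operator with shifted boundary correction at distance d has an eigenvalue in the open right half-plane; consequently for any explicit Runge–Kutta amplification function z with z(0) = 1 and z'(0) = 1, the scheme amplifies some mode for all sufficiently small time steps, i.e., |z(λΔt)| > 1 for small Δt > 0. -/

import Mathlib

lemma amplify (lam : ℂ) (hre : 0 < lam.re) :
    ∀ g : ℂ → ℂ, g 0 = 1 → HasDerivAt g 1 0 →
      ∃ ε > 0, ∀ t : ℝ, 0 < t → t < ε → 1 < ‖g ((t : ℂ) * lam)‖ := by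
  intro g hg0 hg'
  set f : ℝ → ℝ := fun t => (g ((t:ℂ) * lam)).re ^ 2 + (g ((t:ℂ) * lam)).im ^ 2 with hf
  have hmul : HasDerivAt (fun t : ℝ => (t:ℂ) * lam) lam 0 := by
    simpa using (Complex.ofRealCLM.hasDerivAt (x := (0:ℝ))).mul_const lam
  have hg'' : HasDerivAt g 1 (((0:ℝ):ℂ) * lam) := by simpa using hg'
  have hcomp : HasDerivAt (fun t : ℝ => g ((t:ℂ) * lam)) lam 0 := by
    simpa [Function.comp_def] using hg''.scomp (0:ℝ) hmul
  have hrederiv : HasDerivAt (fun t : ℝ => (g ((t:ℂ)*lam)).re) lam.re 0 := by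
    simpa [Function.comp_def] using Complex.reCLM.hasFDerivAt.comp_hasDerivAt (0:ℝ) hcomp
  have himderiv : HasDerivAt (fun t : ℝ => (g ((t:ℂ)*lam)).im) lam.im 0 := by
    simpa [Function.comp_def] using Complex.imCLM.hasFDerivAt.comp_hasDerivAt (0:ℝ) hcomp
  have hf' : HasDerivAt f (2 * lam.re) 0 := by
    have := (hrederiv.pow 2).add (himderiv.pow 2)
    simpa [hg0, hf, Pi.add_def, Pi.pow_def] using this
  have hf0 : f 0 = 1 := by simp [hf, hg0]
  have hev : ∀ᶠ t in nhdsWithin (0:ℝ) {x | x ≠ 0}, lam.re < slope f 0 t :=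
    (hasDerivAt_iff_tendsto_slope.mp hf').eventually
      (eventually_gt_nhds (by linarith : lam.re < 2 * lam.re))
  rw [eventually_nhdsWithin_iff, Metric.eventually_nhds_iff] at hev
  obtain ⟨ε, hε, hball⟩ := hev
  refine ⟨ε, hε, fun t ht htε => ?_⟩
  have hslope : lam.re < slope f 0 t := by
    apply hball (by simpa [Real.dist_eq, abs_of_pos ht] using htε)
    exact ne_of_gt ht
  have hsl : slope f 0 t = (f t - 1) / t := by
    simp [slope_def_field, hf0]
  rw [hsl] at hslope
  have hft : 1 < f t := by
    have h1 := (lt_div_iff₀ ht).mp hslope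
    nlinarith [mul_pos hre ht]
  have habs : (‖g ((t:ℂ)*lam)‖)^2 = f t := by
    rw [hf]; simp only [Complex.sq_norm, Complex.normSq_apply]; ring
  nlinarith [norm_nonneg (g ((t:ℂ)*lam)), habs]

/-- If d > 2/3 the boundary-cell quadratic has a root λ with Re λ > 0, and for any
explicit RK amplification function g with g(0) = 1 and g'(0) = 1, the scheme
amplifies this mode for all sufficiently small time steps: |g(λΔt)| > 1. -/
theorem unstable_mode_for_large_d (d : ℝ) (hd : 2 / 3 < d) :
    ∃ lam : ℂ, (lam ^ 2 - 6 * lam * (d : ℂ) + 4 * lam + 6 = 0 ∧ 0 < lam.re) ∧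
      ∀ g : ℂ → ℂ, g 0 = 1 → HasDerivAt g 1 0 →
        ∃ ε > 0, ∀ t : ℝ, 0 < t → t < ε → 1 < ‖g ((t : ℂ) * lam)‖ := by
  have hs : (0:ℝ) < 6 * d - 4 := by linarith
  by_cases hD : (0:ℝ) ≤ (6*d - 4)^2 - 24
  · set r := Real.sqrt ((6*d-4)^2 - 24) with hrdef
    have hr : r ^ 2 = (6*d-4)^2 - 24 := Real.sq_sqrt hD
    have hrpos : 0 ≤ r := Real.sqrt_nonneg _
    refine ⟨(((6*d-4) + r)/2 : ℝ), ⟨?_, by simp only [Complex.ofReal_re]; linarith⟩, amplify _ (by simp only [Complex.ofReal_re]; linarith)⟩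
    have hreal : (((6*d-4)+r)/2)^2 - 6*(((6*d-4)+r)/2)*d + 4*(((6*d-4)+r)/2) + 6 = 0 := by
      nlinarith [hr]
    push_cast
    have h2 := congrArg Complex.ofReal hreal
    push_cast at h2
    linear_combination h2
  · push_neg at hD
    set b := Real.sqrt (24 - (6*d-4)^2) with hbdef
    have hb : b ^ 2 = 24 - (6*d-4)^2 := Real.sq_sqrt (by linarith)
    set lam : ℂ := (((6*d-4)/2 : ℝ) : ℂ) + ((b/2 : ℝ) : ℂ) * Complex.I with hlam
    have hrepos : 0 < lam.re := by simp [hlam]; linarith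
    refine ⟨lam, ⟨?_, hrepos⟩, amplify _ hrepos⟩
    rw [hlam, Complex.ext_iff]
    constructor <;> simp [pow_two, Complex.mul_re, Complex.mul_im] <;> nlinarith [hb]
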